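/- For any prime p and natural numbers n, q with n = pq or n = pq + 1, the fixed point set of the Z/p-action on the unordered configuration space C_n(ℂ) of n points in the complex plane (where the generator acts by rotation by 2π/p) is homeomorphic to the unordered configuration space C_q(ℂ*) of q points in the punctured plane. -/

import Mathlib

/-- The ordered configuration space of `n` points in `X`. -/
def OConf (n : ℕ) (X : Type*) [TopologicalSpace X] : Type _ :=
  {f : Fin n → X // Function.Injective f}

instance (n : ℕ) (X : Type*) [TopologicalSpace X] : TopologicalSpace (OConf n X) :=
  instTopologicalSpaceSubtype

/-- Two ordered configurations are equivalent if they differ by a permutation. -/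
def confSetoid (n : ℕ) (X : Type*) [TopologicalSpace X] : Setoid (OConf n X) where
  r f g := ∃ σ : Equiv.Perm (Fin n), f.1 = g.1 ∘ σ
  iseqv := by
    constructor
    · exact fun f => ⟨Equiv.refl _, rfl⟩
    · rintro f g ⟨σ, h⟩
      refine ⟨σ.symm, ?_⟩
      funext i
      simp [h]
    · rintro f g h ⟨σ, hσ⟩ ⟨τ, hτ⟩
      exact ⟨σ.trans τ, by rw [hσ, hτ]; rfl⟩

/-- The unordered configuration space of `n` points in `X`, with the quotient topology. -/
def UConf (n : ℕ) (X : Type*) [TopologicalSpace X] : Type _ :=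
  Quotient (confSetoid n X)

instance (n : ℕ) (X : Type*) [TopologicalSpace X] : TopologicalSpace (UConf n X) :=
  instTopologicalSpaceQuotient

/-- Rotation of a configuration of points of `ℂ` by the angle `2π/p`
(the generator of the `ℤ/p`-action on `C_n(ℂ)`). -/
noncomputable def rotC (p n : ℕ) : UConf n ℂ → UConf n ℂ :=
  Quotient.map
    (fun f => ⟨fun i => Complex.exp (2 * Real.pi * Complex.I / p) * f.1 i,
      (mul_right_injective₀ (Complex.exp_ne_zero _)).comp f.2⟩)
    (by
      rintro f g ⟨σ, h⟩
      refine ⟨σ, ?_⟩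
      funext i
      simp only [Function.comp_apply]
      rw [show f.1 i = (g.1 ∘ σ) i from congrFun h i]
      rfl)

namespace Aux

variable {m : ℕ} {X : Type*} [TopologicalSpace X]

/-- The quotient map. -/
def cls (f : OConf m X) : UConf m X := Quotient.mk _ f

lemma continuous_cls : Continuous (cls : OConf m X → UConf m X) :=
  continuous_quot_mk

lemma cls_eq_iff {f g : OConf m X} :
    cls f = cls g ↔ ∃ σ : Equiv.Perm (Fin m), f.1 = g.1 ∘ σ := by
  constructor
  · exact fun h => Quotient.exact h
  · exact fun h => Quotient.sound h

lemma range_eq_of_cls_eq {f g : OConf m X} (h : cls f = cls g) :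
    Set.range f.1 = Set.range g.1 := by
  obtain ⟨σ, hσ⟩ := cls_eq_iff.1 h
  rw [hσ, Set.range_comp, Set.range_eq_univ.2 σ.surjective, Set.image_univ]

lemma cls_eq_of_range_eq {f g : OConf m X} (h : Set.range f.1 = Set.range g.1) :
    cls f = cls g := by
  have ef := Equiv.ofInjective f.1 f.2
  refine cls_eq_iff.2 ⟨(Equiv.ofInjective f.1 f.2).trans
    ((Equiv.setCongr h).trans (Equiv.ofInjective g.1 g.2).symm), ?_⟩
  funext i
  simp only [Function.comp_apply, Equiv.trans_apply]
  rw [Equiv.apply_ofInjective_symm g.2]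
  rfl

/-- Precomposition by a permutation, as a homeomorphism of ordered configuration space. -/
def permHomeo (σ : Equiv.Perm (Fin m)) : OConf m X ≃ₜ OConf m X where
  toFun f := ⟨f.1 ∘ σ, f.2.comp σ.injective⟩
  invFun f := ⟨f.1 ∘ σ.symm, f.2.comp σ.symm.injective⟩
  left_inv f := by
    apply Subtype.ext; funext i; simp
  right_inv f := by
    apply Subtype.ext; funext i; simp
  continuous_toFun := by
    refine Continuous.subtype_mk ?_ _
    exact continuous_pi fun i => (continuous_apply (σ i)).comp continuous_subtype_val
  continuous_invFun := by
    refine Continuous.subtype_mk ?_ _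
    exact continuous_pi fun i => (continuous_apply (σ.symm i)).comp continuous_subtype_val

lemma isOpenMap_cls : IsOpenMap (cls : OConf m X → UConf m X) := by
  intro V hV
  have key : cls ⁻¹' (cls '' V) = ⋃ σ : Equiv.Perm (Fin m), (permHomeo σ) ⁻¹' V := by
    ext f
    simp only [Set.mem_preimage, Set.mem_image, Set.mem_iUnion]
    constructor
    · rintro ⟨g, hgV, hg⟩
      obtain ⟨σ, hσ⟩ := cls_eq_iff.1 hg
      refine ⟨σ, ?_⟩
      have : permHomeo σ f = g := by
        apply Subtype.ext
        exact hσ.symm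
      rwa [this]
    · rintro ⟨σ, hσ⟩
      exact ⟨permHomeo σ f, hσ, cls_eq_iff.2 ⟨σ, rfl⟩⟩
  have : IsOpen (cls ⁻¹' (cls '' V)) := by
    rw [key]
    exact isOpen_iUnion fun σ => (permHomeo σ).continuous.isOpen_preimage V hV
  exact this

/-- Continuity criterion for maps defined on a subset of the unordered configuration
space, via the (saturated) preimage in the ordered configuration space. -/
lemma continuous_of_comp_cls {Y : Type*} [TopologicalSpace Y] (S : Set (UConf m X))
    (F : S → Y)
    (hF : Continuous fun f : {f : OConf m X // cls f ∈ S} => F ⟨cls f.1, f.2⟩) :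
    Continuous F := by
  rw [continuous_def]
  intro W hW
  have h1 : IsOpen ((fun f : {f : OConf m X // cls f ∈ S} => F ⟨cls f.1, f.2⟩) ⁻¹' W) :=
    hF.isOpen_preimage W hW
  rw [isOpen_induced_iff] at h1
  obtain ⟨V, hVopen, hVeq⟩ := h1
  have key : F ⁻¹' W = Subtype.val ⁻¹' (cls '' V) := by
    ext x
    simp only [Set.mem_preimage, Set.mem_image]
    constructor
    · intro hx
      obtain ⟨f, hf⟩ := Quotient.exists_rep x.1
      have hfS : cls f ∈ S := by rw [show cls f = x.1 from hf]; exact x.2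
      have : (⟨f, hfS⟩ : {f : OConf m X // cls f ∈ S}) ∈ Subtype.val ⁻¹' V := by
        rw [hVeq]
        simp only [Set.mem_preimage]
        have : (⟨cls f, hfS⟩ : S) = x := Subtype.ext hf
        rw [this]; exact hx
      exact ⟨f, this, hf⟩
    · rintro ⟨f, hfV, hf⟩
      have hfS : cls f ∈ S := by rw [show cls f = x.1 from hf]; exact x.2
      have : (⟨f, hfS⟩ : {f : OConf m X // cls f ∈ S}) ∈ Subtype.val ⁻¹' V := hfV
      rw [hVeq] at this
      have heq : (⟨cls f, hfS⟩ : S) = x := Subtype.ext hf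
      rw [← heq]
      exact this
  rw [key]
  exact (isOpenMap_cls V hVopen).preimage continuous_subtype_val



lemma isOpen_injective [T2Space X] : IsOpen {f : Fin m → X | Function.Injective f} := by
  have key : {f : Fin m → X | Function.Injective f} =
      ⋂ (i : Fin m), ⋂ (j : Fin m), ⋂ (_ : i ≠ j), {f | f i ≠ f j} := by
    ext f
    simp only [Set.mem_setOf_eq, Set.mem_iInter]
    constructor
    · intro hf i j hij h
      exact hij (hf h)
    · intro h a b hab
      by_contra hne
      exact h a b hne hab
  rw [key]
  refine isOpen_iInter_of_finite fun i => isOpen_iInter_of_finite fun j =>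
    isOpen_iInter_of_finite fun hij => ?_
  exact isOpen_ne_fun (continuous_apply i) (continuous_apply j)

/-- A default configuration of `m` points in `ℂ`. -/
def dfltC : OConf m ℂ :=
  ⟨fun j => (j : ℂ), by
    intro a b hab
    have : ((a : ℕ) : ℂ) = ((b : ℕ) : ℂ) := hab
    exact Fin.ext (Nat.cast_injective this)⟩

/-- A default configuration of `m` points in `ℂ*`. -/
def dfltCs : OConf m {z : ℂ // z ≠ 0} :=
  ⟨fun j => ⟨((j : ℕ) + 1 : ℕ), Nat.cast_ne_zero.2 (Nat.succ_ne_zero _)⟩, by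
    intro a b hab
    have : (((a : ℕ) + 1 : ℕ) : ℂ) = (((b : ℕ) + 1 : ℕ) : ℂ) := congrArg Subtype.val hab
    exact Fin.ext (Nat.succ_injective (Nat.cast_injective this))⟩

/-- Total version of the quotient map, defined on raw tuples. -/
noncomputable def mkC (f : Fin m → ℂ) : UConf m ℂ :=
  if h : Function.Injective f then cls ⟨f, h⟩ else cls dfltC

lemma mkC_eq {f : Fin m → ℂ} (h : Function.Injective f) : mkC f = cls ⟨f, h⟩ := dif_pos h

lemma continuousOn_mkC : ContinuousOn (mkC : (Fin m → ℂ) → UConf m ℂ)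
    {f | Function.Injective f} := by
  rw [continuousOn_iff_continuous_restrict]
  have : Set.domRestrict {f : Fin m → ℂ | Function.Injective f} mkC =
      fun f => cls ⟨f.1, f.2⟩ := by
    funext f
    exact dif_pos f.2
  rw [this]
  exact continuous_cls.comp (Continuous.subtype_mk continuous_subtype_val _)

/-- Total version of the quotient map for configurations in `ℂ*`, defined on raw
complex tuples. -/
noncomputable def mkCs (f : Fin m → ℂ) : UConf m {z : ℂ // z ≠ 0} :=
  if h : Function.Injective f ∧ ∀ j, f j ≠ 0 then
    cls ⟨fun j => ⟨f j, h.2 j⟩, fun a b hab => h.1 (congrArg Subtype.val hab)⟩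
  else cls dfltCs

lemma mkCs_eq {f : Fin m → ℂ} (h1 : Function.Injective f) (h2 : ∀ j, f j ≠ 0) :
    mkCs f = cls ⟨fun j => ⟨f j, h2 j⟩, fun a b hab => h1 (congrArg Subtype.val hab)⟩ :=
  dif_pos ⟨h1, h2⟩

lemma isOpen_mkCs_dom : IsOpen {f : Fin m → ℂ | Function.Injective f ∧ ∀ j, f j ≠ 0} := by
  have : {f : Fin m → ℂ | Function.Injective f ∧ ∀ j, f j ≠ 0} =
      {f | Function.Injective f} ∩ ⋂ j, {f | f j ≠ 0} := by
    ext f; simp [Set.mem_iInter]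
  rw [this]
  exact isOpen_injective.inter (isOpen_iInter_of_finite fun j =>
    isOpen_ne.preimage (continuous_apply j))

lemma continuousOn_mkCs : ContinuousOn (mkCs : (Fin m → ℂ) → UConf m {z : ℂ // z ≠ 0})
    {f | Function.Injective f ∧ ∀ j, f j ≠ 0} := by
  rw [continuousOn_iff_continuous_restrict]
  have : Set.domRestrict {f : Fin m → ℂ | Function.Injective f ∧ ∀ j, f j ≠ 0} mkCs =
      fun f => cls ⟨fun j => ⟨f.1 j, f.2.2 j⟩,
        fun a b hab => f.2.1 (congrArg Subtype.val hab)⟩ := by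
    funext f
    exact dif_pos f.2
  rw [this]
  refine continuous_cls.comp (Continuous.subtype_mk ?_ _)
  exact continuous_pi fun j => ((continuous_apply j).comp continuous_subtype_val).subtype_mk _


section Counting

/-- The rotation `e^{2πi/p}`. -/
noncomputable def zeta (p : ℕ) : ℂ := Complex.exp (2 * Real.pi * Complex.I / p)

lemma zeta_prim {p : ℕ} (hp : p ≠ 0) : IsPrimitiveRoot (zeta p) p :=
  Complex.isPrimitiveRoot_exp p hp

lemma zeta_ne_zero {p : ℕ} (hp : p ≠ 0) : zeta p ≠ 0 :=
  (zeta_prim hp).ne_zero hp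

variable {n : ℕ}

/-- The underlying point set of a configuration, as a finset. -/
noncomputable def Afin (f : OConf n ℂ) : Finset ℂ := Finset.univ.image f.1

/-- The nonzero points of a configuration. -/
noncomputable def Bfin (f : OConf n ℂ) : Finset ℂ := (Afin f).erase 0

/-- The set of `p`-th powers of the nonzero points of a configuration. -/
noncomputable def Pfin (p : ℕ) (f : OConf n ℂ) : Finset ℂ := (Bfin f).image (· ^ p)

lemma mem_Afin {f : OConf n ℂ} {z : ℂ} : z ∈ Afin f ↔ z ∈ Set.range f.1 := by
  simp [Afin, Set.mem_range, eq_comm]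

lemma card_Afin (f : OConf n ℂ) : (Afin f).card = n := by
  rw [Afin, Finset.card_image_of_injective _ f.2, Finset.card_univ, Fintype.card_fin]

lemma Pfin_ne_zero {p : ℕ} (hp : p ≠ 0) {f : OConf n ℂ} {w : ℂ} (hw : w ∈ Pfin p f) :
    w ≠ 0 := by
  obtain ⟨z, hz, rfl⟩ := Finset.mem_image.1 hw
  exact pow_ne_zero _ (Finset.ne_of_mem_erase hz)

variable {p : ℕ}

/-- Under the invariance hypothesis the nonzero points are stable under the orbit. -/
lemma orbit_mem_Bfin (hp : p ≠ 0) {f : OConf n ℂ}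
    (hfix : ∀ z ∈ Afin f, zeta p * z ∈ Afin f) :
    ∀ (k : ℕ), ∀ z ∈ Bfin f, zeta p ^ k * z ∈ Bfin f := by
  intro k
  induction k with
  | zero => intro z hz; simpa using hz
  | succ k ih =>
    intro z hz
    have h1 := ih z hz
    have h2 : zeta p * (zeta p ^ k * z) ∈ Afin f := hfix _ (Finset.mem_of_mem_erase h1)
    have h3 : zeta p * (zeta p ^ k * z) ≠ 0 :=
      mul_ne_zero (zeta_ne_zero hp) (mul_ne_zero (pow_ne_zero _ (zeta_ne_zero hp))
        (Finset.ne_of_mem_erase hz))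
    have : zeta p ^ (k + 1) * z = zeta p * (zeta p ^ k * z) := by ring
    rw [this]
    exact Finset.mem_erase.2 ⟨h3, h2⟩

/-- All `p`-th roots of the `p`-th power of a nonzero point are nonzero points. -/
lemma root_mem_Bfin (hp : p ≠ 0) {f : OConf n ℂ}
    (hfix : ∀ z ∈ Afin f, zeta p * z ∈ Afin f) {z₀ z : ℂ} (hz₀ : z₀ ∈ Bfin f)
    (hz : z ^ p = z₀ ^ p) : z ∈ Bfin f := by
  haveI : NeZero p := ⟨hp⟩
  have hz₀ne : z₀ ≠ 0 := Finset.ne_of_mem_erase hz₀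
  have hu : (z / z₀) ^ p = 1 := by
    rw [div_pow, hz, div_self (pow_ne_zero _ hz₀ne)]
  obtain ⟨k, hk, hku⟩ := (zeta_prim hp).eq_pow_of_pow_eq_one hu
  have : z = zeta p ^ k * z₀ := by
    rw [hku, div_mul_cancel₀ _ hz₀ne]
  rw [this]
  exact orbit_mem_Bfin hp hfix k z₀ hz₀

lemma fiber_card (hp : p ≠ 0) {f : OConf n ℂ}
    (hfix : ∀ z ∈ Afin f, zeta p * z ∈ Afin f) {w : ℂ} (hw : w ∈ Pfin p f) :
    ((Bfin f).filter (fun z => z ^ p = w)).card = p := by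
  haveI : NeZero p := ⟨hp⟩
  obtain ⟨z₀, hz₀, rfl⟩ := Finset.mem_image.1 hw
  have hz₀ne : z₀ ≠ 0 := Finset.ne_of_mem_erase hz₀
  have key : (Bfin f).filter (fun z => z ^ p = z₀ ^ p) =
      (Polynomial.nthRootsFinset p (1 : ℂ)).image (fun u => z₀ * u) := by
    ext z
    simp only [Finset.mem_filter, Finset.mem_image]
    constructor
    · rintro ⟨hzB, hzp⟩
      refine ⟨z / z₀, ?_, by rw [mul_div_cancel₀ _ hz₀ne]⟩
      rw [Polynomial.mem_nthRootsFinset (Nat.pos_of_ne_zero hp), div_pow, hzp,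
        div_self (pow_ne_zero _ hz₀ne)]
    · rintro ⟨u, hu, rfl⟩
      rw [Polynomial.mem_nthRootsFinset (Nat.pos_of_ne_zero hp)] at hu
      have hzp : (z₀ * u) ^ p = z₀ ^ p := by rw [mul_pow, hu, mul_one]
      exact ⟨root_mem_Bfin hp hfix hz₀ hzp, hzp⟩
  rw [key, Finset.card_image_of_injective _ (mul_right_injective₀ hz₀ne),
    (zeta_prim hp).card_nthRootsFinset]

lemma card_Bfin (hp : p ≠ 0) {f : OConf n ℂ}
    (hfix : ∀ z ∈ Afin f, zeta p * z ∈ Afin f) :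
    (Bfin f).card = (Pfin p f).card * p := by
  rw [Finset.card_eq_sum_card_fiberwise (f := fun z => z ^ p) (t := Pfin p f)
    (fun z hz => Finset.mem_image_of_mem _ hz)]
  rw [Finset.sum_congr rfl (fun w hw => fiber_card hp hfix hw), Finset.sum_const,
    smul_eq_mul]

lemma helper1 {p a b : ℕ} (hp : 2 ≤ p) (h : a * p = b * p + 1) : False := by
  have h1 : a * p % p = 0 := Nat.mul_mod_left a p
  have h2 : (b * p + 1) % p = 1 := by
    rw [Nat.add_mod, Nat.mul_mod_left]
    simp [Nat.mod_eq_of_lt (lt_of_lt_of_le one_lt_two hp)]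
  rw [h, h2] at h1
  exact one_ne_zero h1

/-- The main counting lemma: a fixed configuration of `n = pq` or `pq + 1` points
consists of exactly `q` free orbits, plus the origin exactly when `n = pq + 1`. -/
lemma count_main {q : ℕ} (hp : p.Prime) (hn : n = p * q ∨ n = p * q + 1) {f : OConf n ℂ}
    (hfix : ∀ z ∈ Afin f, zeta p * z ∈ Afin f) :
    (Pfin p f).card = q ∧ ((0 : ℂ) ∈ Afin f ↔ n = p * q + 1) := by
  have hp0 : p ≠ 0 := hp.ne_zero
  have hB := card_Bfin hp0 hfix
  by_cases h0 : (0 : ℂ) ∈ Afin f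
  · have hcard : (Pfin p f).card * p + 1 = n := by
      rw [← hB]
      exact (Finset.card_erase_add_one h0).trans (card_Afin f)
    rcases hn with hn | hn
    · exfalso
      refine helper1 (a := q) (b := (Pfin p f).card) hp.two_le ?_
      rw [Nat.mul_comm q p, ← hn]
      exact hcard.symm
    · have h2 : (Pfin p f).card * p + 1 = p * q + 1 := hcard.trans hn
      have h3 := Nat.add_right_cancel h2
      rw [Nat.mul_comm] at h3
      exact ⟨Nat.eq_of_mul_eq_mul_left hp.pos h3, by simp [h0, hn]⟩
  · have hBA : Bfin f = Afin f := Finset.erase_eq_of_notMem h0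
    have hcard : (Pfin p f).card * p = n := by rw [← hB, hBA]; exact card_Afin f
    rcases hn with hn | hn
    · have h3 : p * (Pfin p f).card = p * q := by
        rw [Nat.mul_comm, hcard, hn]
      refine ⟨Nat.eq_of_mul_eq_mul_left hp.pos h3, ?_⟩
      simp only [h0, false_iff]
      intro h
      exact absurd (hn.symm.trans h) (by simp)
    · exfalso
      refine helper1 (a := (Pfin p f).card) (b := q) hp.two_le ?_
      rw [hcard, Nat.mul_comm q p, ← hn]

end Counting


section Recon

lemma roots_eq {p : ℕ} (hp : p ≠ 0) {w z z₀ : ℂ} (hw : z₀ ≠ 0) (h0 : z₀ ^ p = w)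
    (h : z ^ p = w) : ∃ k < p, z = zeta p ^ k * z₀ := by
  haveI : NeZero p := ⟨hp⟩
  have hu : (z / z₀) ^ p = 1 := by rw [div_pow, h, ← h0, div_self (pow_ne_zero _ hw)]
  obtain ⟨k, hk, hku⟩ := (zeta_prim hp).eq_pow_of_pow_eq_one hu
  exact ⟨k, hk, by rw [hku, div_mul_cancel₀ _ hw]⟩

lemma zeta_pow_pow {p : ℕ} (hp : p ≠ 0) (k : ℕ) : (zeta p ^ k) ^ p = 1 := by
  rw [← pow_mul, mul_comm, pow_mul, (zeta_prim hp).pow_eq_one, one_pow]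

/-- The index equivalence `Fin p × Fin q ⊕ Fin (n - pq) ≃ Fin n`. -/
def idxEquiv (p q n : ℕ) (h : p * q ≤ n) : (Fin p × Fin q) ⊕ Fin (n - p * q) ≃ Fin n :=
  (Equiv.sumCongr finProdFinEquiv (Equiv.refl _)).trans (finSumFinEquiv.trans
    (finCongr (by omega)))

/-- Reconstruction of an `n`-point configuration from a `q`-point configuration,
given a choice of `p`-th root function for each of the `q` points. -/
noncomputable def rawG (p q n : ℕ) (h : p * q ≤ n) (root : Fin q → ℂ → ℂ)
    (g : Fin q → ℂ) : Fin n → ℂ :=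
  fun i => Sum.elim (fun kj : Fin p × Fin q => zeta p ^ (kj.1 : ℕ) * root kj.2 (g kj.2))
    (fun _ => 0) ((idxEquiv p q n h).symm i)

variable {p q n : ℕ}

lemma root_ne_zero (hp : p ≠ 0) {root : Fin q → ℂ → ℂ} {g : Fin q → ℂ}
    (hroot : ∀ j, (root j (g j)) ^ p = g j) (hg0 : ∀ j, g j ≠ 0) (j : Fin q) :
    root j (g j) ≠ 0 := by
  intro h
  apply hg0 j
  rw [← hroot j, h, zero_pow hp]

lemma range_rawG (hp : p ≠ 0) (h : p * q ≤ n) {root : Fin q → ℂ → ℂ} {g : Fin q → ℂ}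
    (hroot : ∀ j, (root j (g j)) ^ p = g j) (hg0 : ∀ j, g j ≠ 0) :
    Set.range (rawG p q n h root g) =
      {z | z ^ p ∈ Set.range g} ∪ {z | z = 0 ∧ p * q < n} := by
  ext z
  constructor
  · rintro ⟨i, rfl⟩
    rcases hsum : (idxEquiv p q n h).symm i with kj | t
    · left
      show (rawG p q n h root g i) ^ p ∈ Set.range g
      rw [rawG, hsum]
      simp only [Sum.elim_inl]
      rw [mul_pow, zeta_pow_pow hp, one_mul, hroot]
      exact ⟨kj.2, rfl⟩
    · right
      refine ⟨?_, ?_⟩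
      · show rawG p q n h root g i = 0
        rw [rawG, hsum]
        rfl
      · have := t.2
        omega
  · intro hz
    rcases hz with hz | ⟨hz0, hlt⟩
    · obtain ⟨j, hj⟩ := hz
      obtain ⟨k, hk, hzk⟩ := roots_eq hp (root_ne_zero hp hroot hg0 j) (hroot j) hj.symm
      refine ⟨idxEquiv p q n h (Sum.inl (⟨k, hk⟩, j)), ?_⟩
      rw [rawG, Equiv.symm_apply_apply]
      simp only [Sum.elim_inl]
      rw [hzk]
    · refine ⟨idxEquiv p q n h (Sum.inr ⟨0, by omega⟩), ?_⟩
      rw [rawG, Equiv.symm_apply_apply]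
      simpa using hz0.symm

lemma rawG_inj (hp : p.Prime) (h : p * q ≤ n) (h1 : n ≤ p * q + 1)
    {root : Fin q → ℂ → ℂ} {g : Fin q → ℂ}
    (hroot : ∀ j, (root j (g j)) ^ p = g j) (hg0 : ∀ j, g j ≠ 0)
    (hginj : Function.Injective g) :
    Function.Injective (rawG p q n h root g) := by
  have helim : Function.Injective (Sum.elim
      (fun kj : Fin p × Fin q => zeta p ^ (kj.1 : ℕ) * root kj.2 (g kj.2))
      (fun _ : Fin (n - p * q) => (0 : ℂ))) := by
    intro x y hxy
    have hne : ∀ kj : Fin p × Fin q, zeta p ^ (kj.1 : ℕ) * root kj.2 (g kj.2) ≠ 0 :=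
      fun kj => mul_ne_zero (pow_ne_zero _ (zeta_ne_zero hp.ne_zero))
        (root_ne_zero hp.ne_zero hroot hg0 kj.2)
    match x, y with
    | Sum.inl kj, Sum.inl kj' =>
      simp only [Sum.elim_inl] at hxy
      have hpow : g kj.2 = g kj'.2 := by
        have := congrArg (· ^ p) hxy
        simpa only [mul_pow, zeta_pow_pow hp.ne_zero, one_mul, hroot] using this
      have hj : kj.2 = kj'.2 := hginj hpow
      rw [← hj] at hxy
      have hk : (kj.1 : ℕ) = (kj'.1 : ℕ) := by
        apply (zeta_prim hp.ne_zero).pow_inj kj.1.2 kj'.1.2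
        exact mul_right_cancel₀ (root_ne_zero hp.ne_zero hroot hg0 kj.2) hxy
      have : kj = kj' := Prod.ext (Fin.ext hk) hj
      rw [this]
    | Sum.inl kj, Sum.inr t =>
      exact absurd hxy (by simpa using hne kj)
    | Sum.inr t, Sum.inl kj =>
      exact absurd hxy.symm (by simpa using hne kj)
    | Sum.inr t, Sum.inr t' =>
      have : t = t' := Fin.ext (by have := t.2; have := t'.2; omega)
      rw [this]
  exact helim.comp (idxEquiv p q n h).symm.injective

/-- The global (discontinuous) `p`-th root. -/
noncomputable def rho (p : ℕ) : ℂ → ℂ := fun w => w ^ ((p : ℂ)⁻¹)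

lemma rho_pow (hp : p ≠ 0) (w : ℂ) : (rho p w) ^ p = w :=
  Complex.cpow_nat_inv_pow w hp

/-- Enumeration of a finset of `q` complex numbers. -/
noncomputable def enumP (q : ℕ) (s : Finset ℂ) : Fin q → ℂ :=
  if h : s.card = q then fun j => ((s.equivFinOfCardEq h).symm j : ℂ) else fun _ => 0

lemma enumP_inj {s : Finset ℂ} (h : s.card = q) : Function.Injective (enumP q s) := by
  rw [enumP, dif_pos h]
  intro a b hab
  exact (s.equivFinOfCardEq h).symm.injective (Subtype.ext hab)

lemma enumP_mem {s : Finset ℂ} (h : s.card = q) (j : Fin q) : enumP q s j ∈ s := by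
  rw [enumP, dif_pos h]
  exact ((s.equivFinOfCardEq h).symm j).2

lemma range_enumP {s : Finset ℂ} (h : s.card = q) : Set.range (enumP q s) = ↑s := by
  apply Set.Subset.antisymm
  · rintro w ⟨j, rfl⟩
    exact enumP_mem h j
  · intro w hw
    obtain ⟨j, hj⟩ := (s.equivFinOfCardEq h).symm.surjective ⟨w, hw⟩
    refine ⟨j, ?_⟩
    rw [enumP, dif_pos h, hj]

lemma cls_eq_of_val_range_eq {m : ℕ} {f g : OConf m {z : ℂ // z ≠ 0}}
    (h : Set.range (fun j => (f.1 j : ℂ)) = Set.range (fun j => (g.1 j : ℂ))) :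
    cls f = cls g := by
  apply cls_eq_of_range_eq
  apply Subtype.val_injective.image_injective
  rw [← Set.range_comp, ← Set.range_comp]
  exact h

end Recon


section Maps

variable {p q n : ℕ}

lemma rotC_cls (p : ℕ) (f : OConf n ℂ) :
    rotC p n (cls f) = cls ⟨fun i => zeta p * f.1 i,
      (mul_right_injective₀ (Complex.exp_ne_zero _)).comp f.2⟩ := rfl

lemma fixed_iff (hp : p ≠ 0) (f : OConf n ℂ) :
    rotC p n (cls f) = cls f ↔ ∀ z ∈ Afin f, zeta p * z ∈ Afin f := by
  rw [rotC_cls]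
  constructor
  · intro h z hz
    have hr := range_eq_of_cls_eq h
    rw [mem_Afin] at hz ⊢
    obtain ⟨i, rfl⟩ := hz
    rw [← hr]
    exact ⟨i, rfl⟩
  · intro h
    apply cls_eq_of_range_eq
    have hsub : (Afin f).image (fun z => zeta p * z) ⊆ Afin f := by
      intro z hz
      obtain ⟨w, hw, rfl⟩ := Finset.mem_image.1 hz
      exact h w hw
    have hcard : ((Afin f).image (fun z => zeta p * z)).card = (Afin f).card :=
      Finset.card_image_of_injective _ (mul_right_injective₀ (zeta_ne_zero hp))
    have heq : (Afin f).image (fun z => zeta p * z) = Afin f :=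
      Finset.eq_of_subset_of_card_le hsub (le_of_eq hcard.symm)
    apply Set.Subset.antisymm
    · rintro z ⟨i, rfl⟩
      exact mem_Afin.1 (h _ (mem_Afin.2 ⟨i, rfl⟩))
    · intro z hz
      have hz' : z ∈ (Afin f).image (fun z => zeta p * z) := by
        rw [heq]; exact mem_Afin.2 hz
      obtain ⟨w, hw, rfl⟩ := Finset.mem_image.1 hz'
      obtain ⟨i, rfl⟩ := mem_Afin.1 hw
      exact ⟨i, rfl⟩

/-- Reconstruction map on ordered configurations. -/
noncomputable def stdG (p q n : ℕ) (hp : p.Prime) (hn : n = p * q ∨ n = p * q + 1)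
    (g : OConf q {z : ℂ // z ≠ 0}) : OConf n ℂ :=
  ⟨rawG p q n (by omega) (fun _ => rho p) (fun j => (g.1 j : ℂ)),
    rawG_inj hp (by omega) (by omega)
      (fun j => rho_pow hp.ne_zero _) (fun j => (g.1 j).2)
      (fun a b hab => g.2 (Subtype.ext hab))⟩

lemma val_range_eq_of_rel {g g' : OConf q {z : ℂ // z ≠ 0}}
    (h : (confSetoid q {z : ℂ // z ≠ 0}).r g g') :
    Set.range (fun j => (g.1 j : ℂ)) = Set.range (fun j => (g'.1 j : ℂ)) := by
  obtain ⟨σ, hσ⟩ := h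
  have : (fun j => (g.1 j : ℂ)) = (fun j => (g'.1 j : ℂ)) ∘ σ := by
    funext j
    rw [hσ]
    rfl
  rw [this, Set.range_comp, Set.range_eq_univ.2 σ.surjective, Set.image_univ]

lemma range_stdG (hp : p.Prime) (hn : n = p * q ∨ n = p * q + 1)
    (g : OConf q {z : ℂ // z ≠ 0}) :
    Set.range (stdG p q n hp hn g).1 =
      {z | z ^ p ∈ Set.range (fun j => (g.1 j : ℂ))} ∪ {z | z = 0 ∧ p * q < n} :=
  range_rawG hp.ne_zero (by omega) (fun j => rho_pow hp.ne_zero _) (fun j => (g.1 j).2)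

/-- The reconstruction map `C_q(ℂ*) → C_n(ℂ)`. -/
noncomputable def Gmap (p q n : ℕ) (hp : p.Prime) (hn : n = p * q ∨ n = p * q + 1) :
    UConf q {z : ℂ // z ≠ 0} → UConf n ℂ :=
  Quotient.lift (fun g => cls (stdG p q n hp hn g)) (by
    intro g g' hgg'
    apply cls_eq_of_range_eq
    rw [range_stdG hp hn, range_stdG hp hn, val_range_eq_of_rel hgg'])

lemma Gmap_cls (hp : p.Prime) (hn : n = p * q ∨ n = p * q + 1)
    (g : OConf q {z : ℂ // z ≠ 0}) :
    Gmap p q n hp hn (cls g) = cls (stdG p q n hp hn g) := rfl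

lemma Gmap_fixed (hp : p.Prime) (hn : n = p * q ∨ n = p * q + 1)
    (x : UConf q {z : ℂ // z ≠ 0}) :
    rotC p n (Gmap p q n hp hn x) = Gmap p q n hp hn x := by
  induction x using Quotient.ind with
  | _ g =>
    rw [show (Quotient.mk _ g : UConf q {z : ℂ // z ≠ 0}) = cls g from rfl,
      Gmap_cls hp hn, fixed_iff hp.ne_zero]
    intro z hz
    rw [mem_Afin] at hz ⊢
    rw [range_stdG hp hn] at hz ⊢
    rcases hz with hz | ⟨rfl, hlt⟩
    · left
      simp only [Set.mem_setOf_eq] at hz ⊢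
      rw [mul_pow, (zeta_prim hp.ne_zero).pow_eq_one, one_mul]
      exact hz
    · right
      exact ⟨mul_zero _, hlt⟩

/-- The orbit map on ordered configurations. -/
noncomputable def Fq (p q : ℕ) {n : ℕ} (f : OConf n ℂ) : UConf q {z : ℂ // z ≠ 0} :=
  mkCs (enumP q (Pfin p f))

lemma Pfin_eq_of_range_eq {f g : OConf n ℂ} (h : Set.range f.1 = Set.range g.1) :
    Pfin p f = Pfin p g := by
  have hA : Afin f = Afin g := by
    ext z
    rw [mem_Afin, mem_Afin, h]
  unfold Pfin Bfin
  rw [hA]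

/-- The orbit map `C_n(ℂ) → C_q(ℂ*)` (defined on all of `C_n(ℂ)`; it is only
meaningful and continuous on the fixed-point set). -/
noncomputable def Fbar (p q n : ℕ) : UConf n ℂ → UConf q {z : ℂ // z ≠ 0} :=
  Quotient.lift (Fq p q) (fun f g hfg => by
    show mkCs (enumP q (Pfin p f)) = mkCs (enumP q (Pfin p g))
    rw [Pfin_eq_of_range_eq (range_eq_of_cls_eq (Quotient.sound hfg))])

lemma Fbar_cls (f : OConf n ℂ) : Fbar p q n (cls f) = Fq p q f := rfl

/-- `F ∘ G = id`. -/
lemma Fbar_Gmap (hp : p.Prime) (hn : n = p * q ∨ n = p * q + 1)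
    (g : OConf q {z : ℂ // z ≠ 0}) :
    Fbar p q n (Gmap p q n hp hn (cls g)) = cls g := by
  rw [Gmap_cls hp hn, Fbar_cls]
  have hP : Pfin p (stdG p q n hp hn g) = Finset.univ.image (fun j => (g.1 j : ℂ)) := by
    ext w
    simp only [Finset.mem_image, Finset.mem_univ, true_and]
    constructor
    · intro hw
      obtain ⟨z, hz, rfl⟩ := Finset.mem_image.1 hw
      have hz0 : z ≠ 0 := Finset.ne_of_mem_erase hz
      have hzA : z ∈ Afin (stdG p q n hp hn g) := Finset.mem_of_mem_erase hz
      rw [mem_Afin, range_stdG hp hn] at hzA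
      rcases hzA with hzA | ⟨h0, _⟩
      · obtain ⟨j, hj⟩ := hzA
        exact ⟨j, hj⟩
      · exact absurd h0 hz0
    · rintro ⟨j, rfl⟩
      have hz : rho p (g.1 j : ℂ) ∈ Bfin (stdG p q n hp hn g) := by
        refine Finset.mem_erase.2 ⟨?_, ?_⟩
        · intro h0
          exact (g.1 j).2 (by rw [← rho_pow hp.ne_zero (g.1 j : ℂ), h0, zero_pow hp.ne_zero])
        · rw [mem_Afin, range_stdG hp hn]
          left
          rw [Set.mem_setOf_eq, rho_pow hp.ne_zero]
          exact ⟨j, rfl⟩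
      simpa only [Pfin, rho_pow hp.ne_zero] using Finset.mem_image_of_mem (· ^ p) hz
  have hcard : (Pfin p (stdG p q n hp hn g)).card = q := by
    rw [hP, Finset.card_image_of_injective _ (fun a b hab => g.2 (Subtype.ext hab)),
      Finset.card_univ, Fintype.card_fin]
  rw [Fq, mkCs_eq (enumP_inj hcard)
    (fun j => Pfin_ne_zero hp.ne_zero (enumP_mem hcard j))]
  apply cls_eq_of_val_range_eq
  show Set.range (enumP q (Pfin p (stdG p q n hp hn g))) = _
  rw [range_enumP hcard, hP]
  rw [Finset.coe_image, Finset.coe_univ, Set.image_univ]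

/-- `G ∘ F = id` on fixed configurations. -/
lemma Gmap_Fbar (hp : p.Prime) (hn : n = p * q ∨ n = p * q + 1) (f : OConf n ℂ)
    (hfix : ∀ z ∈ Afin f, zeta p * z ∈ Afin f) :
    Gmap p q n hp hn (Fbar p q n (cls f)) = cls f := by
  obtain ⟨hcard, h0iff⟩ := count_main hp hn hfix
  rw [Fbar_cls, Fq, mkCs_eq (enumP_inj hcard)
    (fun j => Pfin_ne_zero hp.ne_zero (enumP_mem hcard j))]
  refine (Gmap_cls hp hn _).trans ?_
  apply cls_eq_of_range_eq
  refine (range_stdG hp hn _).trans ?_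
  have hval : Set.range (fun j => ((⟨enumP q (Pfin p f) j,
      Pfin_ne_zero hp.ne_zero (enumP_mem hcard j)⟩ : {z : ℂ // z ≠ 0}) : ℂ)) =
      ↑(Pfin p f) := range_enumP hcard
  rw [show (fun j => ((⟨enumP q (Pfin p f) j,
      Pfin_ne_zero hp.ne_zero (enumP_mem hcard j)⟩ : {z : ℂ // z ≠ 0}) : ℂ)) =
      enumP q (Pfin p f) from rfl] at hval
  apply Set.Subset.antisymm
  · rintro z (hz | ⟨rfl, hlt⟩)
    · rw [Set.mem_setOf_eq, hval, Finset.mem_coe] at hz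
      obtain ⟨z₀, hz₀, hzp⟩ := Finset.mem_image.1 hz
      have hzB : z ∈ Bfin f := root_mem_Bfin hp.ne_zero hfix hz₀ hzp.symm
      exact mem_Afin.1 (Finset.mem_of_mem_erase hzB)
    · have hn1 : n = p * q + 1 := by omega
      exact mem_Afin.1 (h0iff.2 hn1)
  · intro z hz
    have hzA : z ∈ Afin f := mem_Afin.2 hz
    by_cases hz0 : z = 0
    · right
      subst hz0
      have hn1 : n = p * q + 1 := h0iff.1 hzA
      exact ⟨rfl, by omega⟩
    · left
      rw [Set.mem_setOf_eq, hval, Finset.mem_coe]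
      exact Finset.mem_image_of_mem _ (Finset.mem_erase.2 ⟨hz0, hzA⟩)

end Maps


section Cont

variable {p q n : ℕ}

lemma continuous_cls_stdG (hp : p.Prime) (hn : n = p * q ∨ n = p * q + 1) :
    Continuous (fun g : OConf q {z : ℂ // z ≠ 0} => cls (stdG p q n hp hn g)) := by
  rw [continuous_iff_continuousAt]
  intro g₀
  have hw0 : ∀ j, (g₀.1 j : ℂ) ≠ 0 := fun j => (g₀.1 j).2
  -- local branch of the p-th root near `g₀`
  set brt : Fin q → ℂ → ℂ := fun j u =>
    rho p (g₀.1 j : ℂ) * Complex.exp (Complex.log (u / (g₀.1 j : ℂ)) / p) with hbrt_def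
  set N : Set (OConf q {z : ℂ // z ≠ 0}) :=
    {g | ∀ j, ((g.1 j : ℂ) / (g₀.1 j : ℂ)) ∈ Complex.slitPlane} with hN_def
  have hval : ∀ j : Fin q, Continuous fun g : OConf q {z : ℂ // z ≠ 0} => (g.1 j : ℂ) :=
    fun j => continuous_subtype_val.comp ((continuous_apply j).comp continuous_subtype_val)
  have hNopen : IsOpen N := by
    have : N = ⋂ j, (fun g : OConf q {z : ℂ // z ≠ 0} => (g.1 j : ℂ) / (g₀.1 j : ℂ)) ⁻¹'
        Complex.slitPlane := by
      ext g; simp [hN_def, Set.mem_iInter]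
    rw [this]
    exact isOpen_iInter_of_finite fun j =>
      Complex.isOpen_slitPlane.preimage ((hval j).div_const _)
  have hg₀N : g₀ ∈ N := by
    intro j
    rw [div_self (hw0 j)]
    exact Complex.one_mem_slitPlane
  have hbrt : ∀ g ∈ N, ∀ j, (brt j (g.1 j : ℂ)) ^ p = (g.1 j : ℂ) := by
    intro g hg j
    have hne : ((g.1 j : ℂ) / (g₀.1 j : ℂ)) ≠ 0 := div_ne_zero (g.1 j).2 (hw0 j)
    rw [hbrt_def, mul_pow, rho_pow hp.ne_zero, ← Complex.exp_nat_mul,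
      mul_div_cancel₀ _ (Nat.cast_ne_zero.2 hp.ne_zero : (p : ℂ) ≠ 0),
      Complex.exp_log hne, mul_div_cancel₀ _ (hw0 j)]
  set raw : OConf q {z : ℂ // z ≠ 0} → Fin n → ℂ :=
    fun g => rawG p q n (by omega) brt (fun j => (g.1 j : ℂ)) with hraw_def
  have hrawc : ContinuousAt raw g₀ := by
    rw [continuousAt_pi]
    intro i
    have : (fun g => raw g i) = fun g =>
        Sum.elim (fun kj : Fin p × Fin q => zeta p ^ (kj.1 : ℕ) * brt kj.2 (g.1 kj.2 : ℂ))
          (fun _ => (0 : ℂ)) ((idxEquiv p q n (by omega)).symm i) := rfl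
    rw [this]
    rcases (idxEquiv p q n (by omega : p * q ≤ n)).symm i with kj | t
    · simp only [Sum.elim_inl]
      have hinner : ContinuousAt (fun g : OConf q {z : ℂ // z ≠ 0} =>
          Complex.log ((g.1 kj.2 : ℂ) / (g₀.1 kj.2 : ℂ))) g₀ := by
        have hdiv : ContinuousAt (fun g : OConf q {z : ℂ // z ≠ 0} =>
            (g.1 kj.2 : ℂ) / (g₀.1 kj.2 : ℂ)) g₀ := ((hval kj.2).div_const _).continuousAt
        have hlog : ContinuousAt Complex.log ((g₀.1 kj.2 : ℂ) / (g₀.1 kj.2 : ℂ)) :=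
          continuousAt_clog (by
            rw [div_self (hw0 kj.2)]; exact Complex.one_mem_slitPlane)
        exact ContinuousAt.comp (f := fun g : OConf q {z : ℂ // z ≠ 0} =>
          (g.1 kj.2 : ℂ) / (g₀.1 kj.2 : ℂ)) hlog hdiv
      have hexp : ContinuousAt (fun g : OConf q {z : ℂ // z ≠ 0} =>
          Complex.exp (Complex.log ((g.1 kj.2 : ℂ) / (g₀.1 kj.2 : ℂ)) / p)) g₀ :=
        Complex.continuous_exp.continuousAt.comp (hinner.div_const _)
      exact continuousAt_const.mul (continuousAt_const.mul hexp)
    · simp only [Sum.elim_inr]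
      exact continuousAt_const
  have hinj₀ : Function.Injective (raw g₀) :=
    rawG_inj hp (by omega) (by omega) (fun j => hbrt g₀ hg₀N j) hw0
      (fun a b hab => g₀.2 (Subtype.ext hab))
  have heq : ∀ g ∈ N, cls (stdG p q n hp hn g) = mkC (raw g) := by
    intro g hg
    have hinj : Function.Injective (raw g) :=
      rawG_inj hp (by omega) (by omega) (fun j => hbrt g hg j) (fun j => (g.1 j).2)
        (fun a b hab => g.2 (Subtype.ext hab))
    rw [mkC_eq hinj]
    apply cls_eq_of_range_eq
    rw [range_stdG hp hn]
    rw [show Set.range (raw g) = Set.range (rawG p q n (by omega) brt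
      (fun j => (g.1 j : ℂ))) from rfl]
    rw [range_rawG hp.ne_zero (by omega) (fun j => hbrt g hg j) (fun j => (g.1 j).2)]
  have hmk : ContinuousAt mkC (raw g₀) :=
    continuousOn_mkC.continuousAt (isOpen_injective.mem_nhds hinj₀)
  have hev : (mkC ∘ raw) =ᶠ[nhds g₀] (fun g => cls (stdG p q n hp hn g)) := by
    filter_upwards [hNopen.mem_nhds hg₀N] with g hg
    exact (heq g hg).symm
  exact (hmk.comp hrawc).congr hev

lemma continuous_Gmap (hp : p.Prime) (hn : n = p * q ∨ n = p * q + 1) :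
    Continuous (Gmap p q n hp hn) :=
  (continuous_cls_stdG hp hn).quotient_lift _

end Cont


section ContF

variable {p q n : ℕ}

lemma continuous_F (hp : p.Prime) (hn : n = p * q ∨ n = p * q + 1) :
    Continuous (fun c : {c : UConf n ℂ // rotC p n c = c} => Fbar p q n c.1) := by
  refine continuous_of_comp_cls {c : UConf n ℂ | rotC p n c = c}
    (fun c => Fbar p q n c.1) ?_
  show Continuous fun f : {f : OConf n ℂ // cls f ∈ {c : UConf n ℂ | rotC p n c = c}} =>
    Fbar p q n (cls f.1)
  rw [continuous_iff_continuousAt]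
  intro f₀
  have hfix₀ : ∀ z ∈ Afin f₀.1, zeta p * z ∈ Afin f₀.1 :=
    (fixed_iff hp.ne_zero f₀.1).1 f₀.2
  have hcard₀ : (Pfin p f₀.1).card = q := (count_main hp hn hfix₀).1
  have hι : ∀ j : Fin q, ∃ i : Fin n,
      f₀.1.1 i ≠ 0 ∧ (f₀.1.1 i) ^ p = enumP q (Pfin p f₀.1) j := by
    intro j
    have hmem := enumP_mem hcard₀ j
    obtain ⟨z, hz, hzp⟩ := Finset.mem_image.1 hmem
    obtain ⟨i, hi⟩ := mem_Afin.1 (Finset.mem_of_mem_erase hz)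
    exact ⟨i, by rw [hi]; exact Finset.ne_of_mem_erase hz, by rw [hi]; exact hzp⟩
  choose ι hι0 hιp using hι
  set raw : {f : OConf n ℂ // cls f ∈ {c : UConf n ℂ | rotC p n c = c}} → Fin q → ℂ :=
    fun f j => (f.1.1 (ι j)) ^ p with hraw_def
  have hrawc : Continuous raw := by
    refine continuous_pi fun j => ?_
    exact ((continuous_apply (ι j)).comp
      (continuous_subtype_val.comp (continuous_subtype_val (p := fun f : OConf n ℂ =>
        cls f ∈ {c : UConf n ℂ | rotC p n c = c})))).pow p
  have hrawf₀ : raw f₀ = enumP q (Pfin p f₀.1) := funext fun j => hιp j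
  set D := {h : Fin q → ℂ | Function.Injective h ∧ ∀ j, h j ≠ 0} with hD_def
  have hf₀D : raw f₀ ∈ D := by
    rw [hrawf₀]
    exact ⟨enumP_inj hcard₀, fun j => Pfin_ne_zero hp.ne_zero (enumP_mem hcard₀ j)⟩
  set N := raw ⁻¹' D with hN_def
  have hNopen : IsOpen N := isOpen_mkCs_dom.preimage hrawc
  have hf₀N : f₀ ∈ N := hf₀D
  have heq : ∀ f ∈ N, Fbar p q n (cls f.1) = mkCs (raw f) := by
    intro f hf
    obtain ⟨hinj, hne⟩ := hf
    have hfix : ∀ z ∈ Afin f.1, zeta p * z ∈ Afin f.1 :=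
      (fixed_iff hp.ne_zero f.1).1 f.2
    have hcard : (Pfin p f.1).card = q := (count_main hp hn hfix).1
    have hmemP : ∀ j, raw f j ∈ Pfin p f.1 := by
      intro j
      have h1 : f.1.1 (ι j) ≠ 0 := by
        intro h
        exact hne j (by rw [hraw_def]; simp only; rw [h, zero_pow hp.ne_zero])
      have h2 : f.1.1 (ι j) ∈ Bfin f.1 :=
        Finset.mem_erase.2 ⟨h1, mem_Afin.2 ⟨ι j, rfl⟩⟩
      exact Finset.mem_image_of_mem _ h2
    have himage : Finset.univ.image (raw f) = Pfin p f.1 := by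
      apply Finset.eq_of_subset_of_card_le
      · intro w hw
        obtain ⟨j, _, rfl⟩ := Finset.mem_image.1 hw
        exact hmemP j
      · rw [hcard, Finset.card_image_of_injective _ hinj, Finset.card_univ,
          Fintype.card_fin]
    rw [Fbar_cls, Fq, mkCs_eq (enumP_inj hcard)
      (fun j => Pfin_ne_zero hp.ne_zero (enumP_mem hcard j)), mkCs_eq hinj hne]
    apply cls_eq_of_val_range_eq
    show Set.range (enumP q (Pfin p f.1)) = Set.range (raw f)
    rw [range_enumP hcard, ← himage, Finset.coe_image, Finset.coe_univ, Set.image_univ]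
  have hmk : ContinuousAt mkCs (raw f₀) :=
    continuousOn_mkCs.continuousAt (isOpen_mkCs_dom.mem_nhds hf₀D)
  have hev : (mkCs ∘ raw) =ᶠ[nhds f₀]
      (fun f : {f : OConf n ℂ // cls f ∈ {c : UConf n ℂ | rotC p n c = c}} =>
        Fbar p q n (cls f.1)) := by
    filter_upwards [hNopen.mem_nhds hf₀N] with f hf
    exact (heq f hf).symm
  exact (hmk.comp hrawc.continuousAt).congr hev

end ContF

end Aux

theorem statement0 (p : ℕ) (hp : p.Prime) (q n : ℕ) (hn : n = p * q ∨ n = p * q + 1) :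
    Nonempty ({c : UConf n ℂ // rotC p n c = c} ≃ₜ UConf q {z : ℂ // z ≠ 0}) := by
  refine ⟨⟨⟨fun c => Aux.Fbar p q n c.1,
    fun x => ⟨Aux.Gmap p q n hp hn x, Aux.Gmap_fixed hp hn x⟩, ?_, ?_⟩, ?_, ?_⟩⟩
  · intro c
    apply Subtype.ext
    obtain ⟨f, hf⟩ := Quotient.exists_rep c.1
    have hf' : Aux.cls f = c.1 := hf
    show Aux.Gmap p q n hp hn (Aux.Fbar p q n c.1) = c.1
    rw [← hf']
    exact Aux.Gmap_Fbar hp hn f ((Aux.fixed_iff hp.ne_zero f).1 (by rw [hf']; exact c.2))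
  · intro x
    induction x using Quotient.ind with
    | _ g => exact Aux.Fbar_Gmap hp hn g
  · exact Aux.continuous_F hp hn
  · exact (Aux.continuous_Gmap hp hn).subtype_mk _
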